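/- If a temporal edge e = (u,v,t,λ) is dominated by another edge e' = (u,v,t',λ'), then for every temporal path P using e there exists a temporal path P' using e' instead of e with start(P') ≥ start(P), end(P') ≤ end(P), and visiting the same sequence of vertices with the same waiting intervals except shrunk at u and v; in particular, removing dominated edges from a temporal graph does not change the earliest-arrival time between any pair of vertices within any time window. -/

import Mathlib

open scoped Classical

structure TEdge (V : Type) where
  src : V
  dst : V
  t : ℝ
  len : ℝ

variable {V : Type}

/-- Consecutive compatibility of temporal edges. -/
def compat (e f : TEdge V) : Prop := e.dst = f.src ∧ e.t + e.len ≤ f.t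

/-- A temporal path from `x` to `y`: a nonempty list of temporal edges of `E`,
starting at `x`, ending at `y`, consecutively compatible. -/
def IsPath (E : Set (TEdge V)) (x y : V) (p : List (TEdge V)) : Prop :=
  p ≠ [] ∧ (∀ e ∈ p, e ∈ E) ∧ p.head?.map TEdge.src = some x ∧
    p.getLast?.map TEdge.dst = some y ∧ List.Chain' compat p

/-- Starting time of a temporal path. -/
def startT (p : List (TEdge V)) : ℝ := ((p.head?).map TEdge.t).getD 0

/-- Ending (arrival) time of a temporal path. -/
def endT (p : List (TEdge V)) : ℝ := ((p.getLast?).map (fun e => e.t + e.len)).getD 0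

/-- Distance (sum of traversal times) of a temporal path. -/
def distT (p : List (TEdge V)) : ℝ := (p.map TEdge.len).sum

/-- Edge `e'` dominates edge `e`. -/
def Dominates (e' e : TEdge V) : Prop :=
  e'.src = e.src ∧ e'.dst = e.dst ∧ e.t ≤ e'.t ∧ e'.t + e'.len ≤ e.t + e.len ∧
    (e.t < e'.t ∨ e'.t + e'.len < e.t + e.len)

/-- Earliest-arrival time from `x` to `y` within `[tα, tω]` (⊤ if unreachable). -/
noncomputable def eaTime (E : Set (TEdge V)) (x y : V) (tα tω : ℝ) : EReal :=
  sInf {a : EReal | ∃ p, IsPath E x y p ∧ tα ≤ startT p ∧ endT p ≤ tω ∧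
    a = ((endT p : ℝ) : EReal)}

/-- Weak domination (non-strict). -/
def WD (e' e : TEdge V) : Prop :=
  e'.src = e.src ∧ e'.dst = e.dst ∧ e.t ≤ e'.t ∧ e'.t + e'.len ≤ e.t + e.len

lemma WD.refl' (e : TEdge V) : WD e e := ⟨rfl, rfl, le_refl _, le_refl _⟩

lemma Dominates.wd {e' e : TEdge V} (h : Dominates e' e) : WD e' e :=
  ⟨h.1, h.2.1, h.2.2.1, h.2.2.2.1⟩

lemma WD.trans' {a b c : TEdge V} (h1 : WD a b) (h2 : WD b c) : WD a c :=
  ⟨h1.1.trans h2.1, h1.2.1.trans h2.2.1, h2.2.2.1.trans h1.2.2.1,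
    h1.2.2.2.trans h2.2.2.2⟩

lemma Dominates.len_lt {e' e : TEdge V} (h : Dominates e' e) : e'.len < e.len := by
  rcases h with ⟨-, -, h1, h2, h3 | h3⟩ <;> linarith

lemma wd_compat_left {a e e' : TEdge V} (h : compat a e) (hw : WD e' e) : compat a e' :=
  ⟨h.1.trans hw.1.symm, h.2.trans hw.2.2.1⟩

lemma wd_compat_right {b e e' : TEdge V} (h : compat e b) (hw : WD e' e) : compat e' b :=
  ⟨hw.2.1.trans h.1, hw.2.2.2.trans h.2⟩

lemma chain'_map_wd {E : Set (TEdge V)} {φ : TEdge V → TEdge V}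
    (hφ : ∀ f ∈ E, WD (φ f) f) :
    ∀ p : List (TEdge V), (∀ f ∈ p, f ∈ E) → List.Chain' compat p →
      List.Chain' compat (p.map φ)
  | [], _, _ => List.isChain_nil
  | [_], _, _ => List.isChain_singleton _
  | a :: b :: l, hm, hc => by
      change List.IsChain compat _ at hc ⊢
      rw [List.map_cons, List.map_cons, List.isChain_cons_cons]
      rw [List.isChain_cons_cons] at hc
      refine ⟨?_, ?_⟩
      · have hwa := hφ a (hm a (by simp))
        have hwb := hφ b (hm b (by simp))
        exact wd_compat_right (wd_compat_left hc.1 hwb) hwa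
      · have := chain'_map_wd hφ (b :: l) (fun f hf => hm f (by simp [hf])) hc.2
        exact this

lemma map_path {E E' : Set (TEdge V)} {φ : TEdge V → TEdge V}
    (hφ1 : ∀ f ∈ E, φ f ∈ E') (hφ2 : ∀ f ∈ E, WD (φ f) f)
    {x y : V} {p : List (TEdge V)} (hp : IsPath E x y p) :
    IsPath E' x y (p.map φ) ∧ startT p ≤ startT (p.map φ) ∧
      endT (p.map φ) ≤ endT p := by
  obtain ⟨hne, hmem, hhead, hlast, hchain⟩ := hp
  obtain ⟨a, p', rfl⟩ := List.exists_cons_of_ne_nil hne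
  have hwa := hφ2 a (hmem a (by simp))
  obtain ⟨b, hb⟩ : ∃ b, (a :: p').getLast? = some b := by
    cases h : (a :: p').getLast? with
    | none => simp [List.getLast?_eq_none_iff] at h
    | some b => exact ⟨b, rfl⟩
  have hbmem : b ∈ a :: p' := by
    obtain ⟨h₁, rfl⟩ := List.mem_getLast?_eq_getLast hb
    exact List.getLast_mem h₁
  have hwb := hφ2 b (hmem b hbmem)
  refine ⟨⟨by simp, ?_, ?_, ?_, chain'_map_wd hφ2 _ hmem hchain⟩, ?_, ?_⟩
  · intro f hf
    rw [List.mem_map] at hf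
    obtain ⟨g, hg, rfl⟩ := hf
    exact hφ1 g (hmem g hg)
  · simp only [List.map_cons, List.head?_cons, Option.map_some] at hhead ⊢
    rw [hwa.1]; exact hhead
  · rw [List.getLast?_map, hb]
    rw [hb] at hlast
    simp only [Option.map_some] at hlast ⊢
    rw [hwb.2.1]; exact hlast
  · simp only [startT, List.map_cons, List.head?_cons, Option.map_some, Option.getD_some]
    exact hwa.2.2.1
  · simp only [endT, List.getLast?_map, hb, Option.map_some, Option.getD_some]
    exact hwb.2.2.2

/-- If `e` is dominated by `e'`, then every temporal path using `e` yields,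
by replacing `e` with `e'`, a temporal path with the same vertex sequence,
no-earlier start and no-later end; consequently removing dominated edges does
not change any earliest-arrival time within any time window. -/
theorem stmt8 (E : Set (TEdge V)) (hE : E.Finite) (e e' : TEdge V)
    (he : e ∈ E) (he' : e' ∈ E) (hd : Dominates e' e) :
    (∀ (x y : V) (A C : List (TEdge V)), IsPath E x y (A ++ e :: C) →
      IsPath E x y (A ++ e' :: C) ∧
      startT (A ++ e :: C) ≤ startT (A ++ e' :: C) ∧
      endT (A ++ e' :: C) ≤ endT (A ++ e :: C)) ∧
    (∀ (x y : V) (tα tω : ℝ), eaTime E x y tα tω =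
      eaTime {f ∈ E | ¬ ∃ g ∈ E, Dominates g f} x y tα tω) := by
  have hwd := hd.wd
  constructor
  · intro x y A C hp
    obtain ⟨hne, hmem, hhead, hlast, hchain⟩ := hp
    change List.IsChain compat _ at hchain
    rw [List.isChain_append] at hchain
    obtain ⟨hA, hec, hglue⟩ := hchain
    rw [List.isChain_cons] at hec
    have hchain' : List.Chain' compat (A ++ e' :: C) := by
      change List.IsChain compat _
      rw [List.isChain_append, List.isChain_cons]
      refine ⟨hA, ⟨fun b hb => wd_compat_right (hec.1 b hb) hwd, hec.2⟩, ?_⟩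
      intro a ha b hb
      simp only [List.head?_cons, Option.mem_def, Option.some_inj] at hb
      subst hb
      exact wd_compat_left (hglue a ha e (by simp)) hwd
    refine ⟨⟨by simp, ?_, ?_, ?_, hchain'⟩, ?_, ?_⟩
    · intro f hf
      rcases List.mem_append.mp hf with h | h
      · exact hmem f (by simp [h])
      · rcases List.mem_cons.mp h with rfl | h
        · exact he'
        · exact hmem f (by simp [h])
    · cases A with
      | nil =>
          simp only [List.nil_append, List.head?_cons, Option.map_some] at hhead ⊢
          rw [hwd.1]; exact hhead
      | cons a A' => simpa using hhead
    · rw [List.getLast?_append_of_ne_nil _ (by simp)] at hlast ⊢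
      cases C with
      | nil =>
          simp only [List.getLast?_singleton, Option.map_some] at hlast ⊢
          rw [hwd.2.1]; exact hlast
      | cons c C' =>
          rw [List.getLast?_cons_cons] at hlast ⊢
          exact hlast
    · cases A with
      | nil =>
          simp only [startT, List.nil_append, List.head?_cons, Option.map_some,
            Option.getD_some]
          exact hwd.2.2.1
      | cons a A' => simp [startT]
    · simp only [endT]
      rw [List.getLast?_append_of_ne_nil _ (by simp),
        List.getLast?_append_of_ne_nil _ (by simp)]
      cases C with
      | nil =>
          simp only [List.getLast?_singleton, Option.map_some, Option.getD_some]
          exact hwd.2.2.2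
      | cons c C' =>
          rw [List.getLast?_cons_cons, List.getLast?_cons_cons]
  · intro x y tα tω
    set E' : Set (TEdge V) := {f ∈ E | ¬ ∃ g ∈ E, Dominates g f} with hE'
    have key : ∀ f ∈ E, ∃ g, g ∈ E' ∧ WD g f := by
      intro f hf
      have hS : {g ∈ E | WD g f}.Finite := hE.subset (fun g hg => hg.1)
      have hSne : {g ∈ E | WD g f}.Nonempty := ⟨f, hf, WD.refl' f⟩
      obtain ⟨g, hgS, hmin⟩ := hS.exists_minimalFor TEdge.len _ hSne
      refine ⟨g, ⟨hgS.1, ?_⟩, hgS.2⟩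
      rintro ⟨h, hhE, hdom⟩
      have hhS : h ∈ {g ∈ E | WD g f} := ⟨hhE, hdom.wd.trans' hgS.2⟩
      exact absurd (hmin hhS (le_of_lt hdom.len_lt)) (not_le.mpr hdom.len_lt)
    classical
    set φ : TEdge V → TEdge V := fun f => if h : f ∈ E then (key f h).choose else f
      with hφdef
    have hφ1 : ∀ f ∈ E, φ f ∈ E' := by
      intro f hf
      simp only [hφdef, dif_pos hf]
      exact (key f hf).choose_spec.1
    have hφ2 : ∀ f ∈ E, WD (φ f) f := by
      intro f hf
      simp only [hφdef, dif_pos hf]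
      exact (key f hf).choose_spec.2
    apply le_antisymm
    · apply sInf_le_sInf
      rintro a ⟨p, hp, h1, h2, rfl⟩
      exact ⟨p, ⟨hp.1, fun f hf => (hp.2.1 f hf).1, hp.2.2.1, hp.2.2.2.1, hp.2.2.2.2⟩,
        h1, h2, rfl⟩
    · apply le_sInf
      rintro a ⟨p, hp, h1, h2, rfl⟩
      obtain ⟨hp', hs, hend⟩ := map_path hφ1 hφ2 hp
      calc eaTime E' x y tα tω ≤ ((endT (p.map φ) : ℝ) : EReal) :=
            sInf_le ⟨p.map φ, hp', h1.trans hs, hend.trans h2, rfl⟩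
        _ ≤ ((endT p : ℝ) : EReal) := by exact_mod_cast hend
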